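/- arXiv:2404.06001 — 4 statements merged into one kernel-verified Lean document; each statement's English description precedes it below -/
import Mathlib

section
/- Privacy amplification by subsampling: if A is (ε, δ)-DP, and B(D) = A(D_s) where D_s is obtained by including each record of D independently with probability q, then B satisfies (ε̃, δ̃)-DP with ε̃ = ln(1 + (e^ε − 1)q) and δ̃ = q·δ. -/
open MeasureTheory

open scoped ENNReal

private lemma subsample_real_key {t q : ℝ} (ht : 1 ≤ t) (hq0 : 0 ≤ q) (hq1 : q ≤ 1) :
    t ≤ (1 + (t - 1) * q) * (t * (1 - q) + q) := by
  nlinarith [mul_nonneg (mul_nonneg (sq_nonneg (t - 1)) hq0) (by linarith : (0:ℝ) ≤ 1 - q)]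

private lemma subsample_per_hard {t q δ w : ℝ} (ht : 1 ≤ t) (hq0 : 0 ≤ q) (hq1 : q ≤ 1)
    (hδ : 0 ≤ δ) (hw : 0 ≤ w) {a b : ℝ≥0∞}
    (hab : a ≤ ENNReal.ofReal t * b + ENNReal.ofReal δ) :
    ENNReal.ofReal w * a ≤
      ENNReal.ofReal (1 + (t - 1) * q) *
        (ENNReal.ofReal ((1 - q) * w) * a + ENNReal.ofReal (q * w) * b) +
      ENNReal.ofReal (w * (q * δ)) := by
  have ht0 : (0:ℝ) < t := lt_of_lt_of_le one_pos ht
  set C := 1 + (t - 1) * q with hC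
  have hC1 : 1 ≤ C := by nlinarith
  have hCt : C ≤ t := by nlinarith
  have hC0 : 0 ≤ C := by linarith
  set β := q * C / t with hβ
  have hβ0 : 0 ≤ β := by positivity
  have hβt : β * t = q * C := by
    rw [hβ]
    exact div_mul_cancel₀ _ ht0.ne'
  have hβq : β ≤ q := by
    rw [hβ, div_le_iff₀ ht0]
    nlinarith
  have hα0 : 0 ≤ 1 - β := by linarith [le_trans hβq hq1]
  have hαC : 1 - β ≤ C * (1 - q) := by
    have h1 : (1 - β) * t ≤ (C * (1 - q)) * t := by
      nlinarith [subsample_real_key ht hq0 hq1, hβt]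
    exact le_of_mul_le_mul_right h1 ht0
  have split : ENNReal.ofReal w * a
      = ENNReal.ofReal ((1 - β) * w) * a + ENNReal.ofReal (β * w) * a := by
    rw [← add_mul, ← ENNReal.ofReal_add (mul_nonneg hα0 hw) (mul_nonneg hβ0 hw)]
    congr 2
    ring
  calc ENNReal.ofReal w * a
      = ENNReal.ofReal ((1 - β) * w) * a + ENNReal.ofReal (β * w) * a := split
    _ ≤ ENNReal.ofReal ((1 - β) * w) * a
          + ENNReal.ofReal (β * w) * (ENNReal.ofReal t * b + ENNReal.ofReal δ) := by
        gcongr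
    _ = ENNReal.ofReal ((1 - β) * w) * a
          + (ENNReal.ofReal (β * w * t) * b + ENNReal.ofReal (β * w * δ)) := by
        rw [mul_add, ← mul_assoc, ← ENNReal.ofReal_mul (mul_nonneg hβ0 hw),
          ← ENNReal.ofReal_mul (mul_nonneg hβ0 hw)]
    _ ≤ ENNReal.ofReal (C * ((1 - q) * w)) * a
          + (ENNReal.ofReal (C * (q * w)) * b + ENNReal.ofReal (w * (q * δ))) := by
        have h1 : (1 - β) * w ≤ C * ((1 - q) * w) := by
          nlinarith [mul_le_mul_of_nonneg_right hαC hw]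
        have h2 : β * w * t = C * (q * w) := by
          rw [mul_comm β w, mul_assoc, hβt]; ring
        have h3 : β * w * δ ≤ w * (q * δ) := by
          nlinarith [mul_le_mul_of_nonneg_right hβq (mul_nonneg hw hδ)]
        exact add_le_add (mul_le_mul_left (ENNReal.ofReal_le_ofReal h1) a)
          (add_le_add (mul_le_mul_left (ENNReal.ofReal_le_ofReal (le_of_eq h2)) b)
            (ENNReal.ofReal_le_ofReal h3))
    _ = ENNReal.ofReal C *
          (ENNReal.ofReal ((1 - q) * w) * a + ENNReal.ofReal (q * w) * b) +
        ENNReal.ofReal (w * (q * δ)) := by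
        rw [ENNReal.ofReal_mul hC0, ENNReal.ofReal_mul hC0, mul_add, mul_assoc, mul_assoc,
          add_assoc]

private lemma subsample_per_easy {t q δ w : ℝ} (ht : 1 ≤ t) (hq0 : 0 ≤ q) (hq1 : q ≤ 1)
    (hδ : 0 ≤ δ) (hw : 0 ≤ w) {a b : ℝ≥0∞}
    (hab : b ≤ ENNReal.ofReal t * a + ENNReal.ofReal δ) :
    ENNReal.ofReal ((1 - q) * w) * a + ENNReal.ofReal (q * w) * b ≤
      ENNReal.ofReal (1 + (t - 1) * q) * (ENNReal.ofReal w * a) +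
      ENNReal.ofReal (w * (q * δ)) := by
  have hC0 : (0:ℝ) ≤ 1 + (t - 1) * q := by nlinarith
  calc ENNReal.ofReal ((1 - q) * w) * a + ENNReal.ofReal (q * w) * b
      ≤ ENNReal.ofReal ((1 - q) * w) * a
          + ENNReal.ofReal (q * w) * (ENNReal.ofReal t * a + ENNReal.ofReal δ) := by
        gcongr
    _ = ENNReal.ofReal ((1 - q) * w) * a
          + (ENNReal.ofReal (q * w * t) * a + ENNReal.ofReal (q * w * δ)) := by
        rw [mul_add, ← mul_assoc, ← ENNReal.ofReal_mul (mul_nonneg hq0 hw),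
          ← ENNReal.ofReal_mul (mul_nonneg hq0 hw)]
    _ = ENNReal.ofReal ((1 - q) * w + q * w * t) * a + ENNReal.ofReal (w * (q * δ)) := by
        rw [ENNReal.ofReal_add (mul_nonneg (by linarith) hw)
          (mul_nonneg (mul_nonneg hq0 hw) (by linarith)), add_mul, ← add_assoc]
        congr 2
        ring
    _ = ENNReal.ofReal (1 + (t - 1) * q) * (ENNReal.ofReal w * a) +
          ENNReal.ofReal (w * (q * δ)) := by
        rw [show (1 - q) * w + q * w * t = (1 + (t - 1) * q) * w by ring,
          ENNReal.ofReal_mul hC0, mul_assoc]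

private lemma subsample_sum_split {X : Type*} [DecidableEq X] (q : ℝ) {x : X} {D : Finset X}
    (hx : x ∉ D) (f : Finset X → ℝ≥0∞) :
    ∑ S ∈ (insert x D).powerset,
        ENNReal.ofReal (q ^ S.card * (1 - q) ^ ((insert x D).card - S.card)) * f S
      = ∑ S ∈ D.powerset,
          (ENNReal.ofReal ((1 - q) * (q ^ S.card * (1 - q) ^ (D.card - S.card))) * f S +
           ENNReal.ofReal (q * (q ^ S.card * (1 - q) ^ (D.card - S.card))) *
             f (insert x S)) := by
  have hdisj : Disjoint D.powerset (D.powerset.image (insert x)) := by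
    rw [Finset.disjoint_left]
    rintro S hS hS'
    obtain ⟨T, _, rfl⟩ := Finset.mem_image.mp hS'
    exact hx (Finset.mem_powerset.mp hS (Finset.mem_insert_self x T))
  have hinj : ∀ S ∈ D.powerset, ∀ T ∈ D.powerset, insert x S = insert x T → S = T := by
    intro S hS T hT h
    have hxS : x ∉ S := fun hm => hx (Finset.mem_powerset.mp hS hm)
    have hxT : x ∉ T := fun hm => hx (Finset.mem_powerset.mp hT hm)
    rw [← Finset.erase_insert hxS, ← Finset.erase_insert hxT, h]
  rw [Finset.powerset_insert, Finset.sum_union hdisj, Finset.sum_image hinj,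
    ← Finset.sum_add_distrib]
  refine Finset.sum_congr rfl fun S hS => ?_
  have hSD : S ⊆ D := Finset.mem_powerset.mp hS
  have hxS : x ∉ S := fun hm => hx (hSD hm)
  have hcard : (insert x D).card = D.card + 1 := Finset.card_insert_of_notMem hx
  have hcard2 : (insert x S).card = S.card + 1 := Finset.card_insert_of_notMem hxS
  have hle : S.card ≤ D.card := Finset.card_le_card hSD
  congr 2
  · rw [hcard, Nat.succ_sub hle, pow_succ]
    ring
  · rw [hcard, hcard2, Nat.succ_sub_succ, pow_succ]
    ring

private lemma subsample_sum_w {X : Type*} [DecidableEq X] {q : ℝ} (D : Finset X) :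
    ∑ S ∈ D.powerset, q ^ S.card * (1 - q) ^ (D.card - S.card) = 1 := by
  have h := Finset.prod_add (fun _ : X => q) (fun _ : X => 1 - q) D
  have h2 : ∀ S ∈ D.powerset,
      (∏ _i ∈ S, q) * ∏ _i ∈ D \ S, (1 - q)
        = q ^ S.card * (1 - q) ^ (D.card - S.card) := by
    intro S hS
    rw [Finset.prod_const, Finset.prod_const, Finset.card_sdiff_of_subset (Finset.mem_powerset.mp hS)]
  rw [Finset.sum_congr rfl h2] at h
  simpa using h.symm

/-- Privacy amplification by Poisson subsampling. -/
theorem subsampling_amplification {X Ω : Type*} [DecidableEq X] [MeasurableSpace Ω]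
    (A : Finset X → Measure Ω) (ε δ q : ℝ) (hε : 0 ≤ ε) (hδ : 0 ≤ δ)
    (hq0 : 0 ≤ q) (hq1 : q ≤ 1)
    -- A is (ε, δ)-DP under the add/remove-one-record neighboring relation
    (hA : ∀ D D' : Finset X,
      ((∃ x ∉ D, D' = insert x D) ∨ (∃ x ∉ D', D = insert x D')) →
      ∀ O : Set Ω, MeasurableSet O →
        A D O ≤ ENNReal.ofReal (Real.exp ε) * A D' O + ENNReal.ofReal δ) :
    -- B(D) = A(D_s), with each record included independently with probability q,
    -- satisfies (ln(1 + (e^ε − 1)q), q·δ)-DP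
    ∀ D D' : Finset X,
      ((∃ x ∉ D, D' = insert x D) ∨ (∃ x ∉ D', D = insert x D')) →
      ∀ O : Set Ω, MeasurableSet O →
        (∑ S ∈ D.powerset,
            ENNReal.ofReal (q ^ S.card * (1 - q) ^ (D.card - S.card)) * A S O) ≤
          ENNReal.ofReal (Real.exp (Real.log (1 + (Real.exp ε - 1) * q))) *
            (∑ S ∈ D'.powerset,
              ENNReal.ofReal (q ^ S.card * (1 - q) ^ (D'.card - S.card)) * A S O) +
          ENNReal.ofReal (q * δ) := by
  intro D D' hnb O hO
  have ht : 1 ≤ Real.exp ε := Real.one_le_exp hε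
  have hC0 : (0:ℝ) < 1 + (Real.exp ε - 1) * q := by nlinarith
  rw [Real.exp_log hC0]
  have hw : ∀ (E S : Finset X), 0 ≤ q ^ S.card * (1 - q) ^ (E.card - S.card) := fun E S =>
    mul_nonneg (pow_nonneg hq0 _) (pow_nonneg (by linarith) _)
  have hδsum : ∀ E : Finset X, ENNReal.ofReal (q * δ)
      = ∑ S ∈ E.powerset,
          ENNReal.ofReal ((q ^ S.card * (1 - q) ^ (E.card - S.card)) * (q * δ)) := by
    intro E
    rw [← ENNReal.ofReal_sum_of_nonneg
      (fun S _ => mul_nonneg (hw E S) (mul_nonneg hq0 hδ)),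
      ← Finset.sum_mul, subsample_sum_w E, one_mul]
  rcases hnb with ⟨x, hx, rfl⟩ | ⟨x, hx, rfl⟩
  · rw [subsample_sum_split q hx (fun S => A S O), Finset.mul_sum, hδsum D,
      ← Finset.sum_add_distrib]
    refine Finset.sum_le_sum fun S hS => ?_
    have hxS : x ∉ S := fun hm => hx (Finset.mem_powerset.mp hS hm)
    exact subsample_per_hard ht hq0 hq1 hδ (hw D S)
      (hA S (insert x S) (Or.inl ⟨x, hxS, rfl⟩) O hO)
  · rw [subsample_sum_split q hx (fun S => A S O), Finset.mul_sum, hδsum D',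
      ← Finset.sum_add_distrib]
    refine Finset.sum_le_sum fun S hS => ?_
    have hxS : x ∉ S := fun hm => hx (Finset.mem_powerset.mp hS hm)
    exact subsample_per_easy ht hq0 hq1 hδ (hw D' S)
      (hA (insert x S) S (Or.inr ⟨x, hxS, rfl⟩) O hO)
end

section
/- Exponential mechanism: selecting outcome r ∈ R with probability proportional to exp(ε·q(D, r)/(2·S(q))), where S(q) is the sensitivity of the quality function q, satisfies ε-differential privacy. -/
/-- The exponential mechanism satisfies ε-differential privacy. -/
theorem exponential_mechanism_dp {D R : Type*} [Fintype R] [Nonempty R]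
    (Neighbor : D → D → Prop) (q : D → R → ℝ) (ε Sq : ℝ) (hε : 0 ≤ ε) (hS : 0 < Sq)
    -- Sq is the sensitivity of the quality function q
    (hsens : ∀ d d', Neighbor d d' → ∀ r, |q d r - q d' r| ≤ Sq) :
    ∀ d d', Neighbor d d' → ∀ r : R,
      Real.exp (ε * q d r / (2 * Sq)) / (∑ r' : R, Real.exp (ε * q d r' / (2 * Sq))) ≤
        Real.exp ε *
          (Real.exp (ε * q d' r / (2 * Sq)) /
            (∑ r' : R, Real.exp (ε * q d' r' / (2 * Sq)))) := by
  intro d d' hN r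
  set a : R → ℝ := fun r => Real.exp (ε * q d r / (2 * Sq)) with ha
  set b : R → ℝ := fun r => Real.exp (ε * q d' r / (2 * Sq)) with hb
  have key : ∀ r, a r ≤ Real.exp (ε / 2) * b r := by
    intro r
    simp only [ha, hb]
    rw [← Real.exp_add]
    apply Real.exp_le_exp.2
    have h1 := (abs_le.1 (hsens d d' hN r)).2
    have : ε * q d r / (2 * Sq) - ε * q d' r / (2 * Sq) ≤ ε / 2 := by
      rw [div_sub_div_same, ← mul_sub]
      rw [div_le_div_iff₀ (by positivity) (by norm_num : (0:ℝ) < 2)]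
      calc ε * (q d r - q d' r) * 2 ≤ ε * Sq * 2 := by
            apply mul_le_mul_of_nonneg_right _ (by norm_num)
            exact mul_le_mul_of_nonneg_left h1 hε
        _ = ε * (2 * Sq) := by ring
    linarith
  have key' : ∀ r, b r ≤ Real.exp (ε / 2) * a r := by
    intro r
    simp only [ha, hb]
    rw [← Real.exp_add]
    apply Real.exp_le_exp.2
    have h1 := (abs_le.1 (hsens d d' hN r)).1
    have : ε * q d' r / (2 * Sq) - ε * q d r / (2 * Sq) ≤ ε / 2 := by
      rw [div_sub_div_same, ← mul_sub]
      rw [div_le_div_iff₀ (by positivity) (by norm_num : (0:ℝ) < 2)]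
      calc ε * (q d' r - q d r) * 2 ≤ ε * Sq * 2 := by
            apply mul_le_mul_of_nonneg_right _ (by norm_num)
            apply mul_le_mul_of_nonneg_left _ hε
            linarith
        _ = ε * (2 * Sq) := by ring
    linarith
  have hSa : 0 < ∑ r' : R, a r' :=
    Finset.sum_pos (fun r _ => Real.exp_pos _) Finset.univ_nonempty
  have hSb : 0 < ∑ r' : R, b r' :=
    Finset.sum_pos (fun r _ => Real.exp_pos _) Finset.univ_nonempty
  have hsum : ∑ r' : R, b r' ≤ Real.exp (ε / 2) * ∑ r' : R, a r' := by
    rw [Finset.mul_sum]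
    exact Finset.sum_le_sum fun r _ => key' r
  calc a r / (∑ r' : R, a r') ≤ Real.exp (ε / 2) * b r / (∑ r' : R, a r') := by
        gcongr
        exact key r
    _ ≤ Real.exp (ε / 2) * b r / ((∑ r' : R, b r') / Real.exp (ε / 2)) := by
        apply div_le_div_of_nonneg_left (by positivity) (by positivity)
        rw [div_le_iff₀ (Real.exp_pos _)]
        linarith [hsum]
    _ = Real.exp ε * (b r / (∑ r' : R, b r')) := by
        rw [div_div_eq_mul_div, mul_right_comm, ← Real.exp_add, add_halves, mul_div_assoc]
end

section
/- Report-noisy-max with Laplace noise on counts: given m counting queries each of sensitivity 1, adding independent Laplace(2/ε) noise to each count and releasing only the index of the maximum noisy count satisfies ε-differential privacy. -/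
open MeasureTheory

/-- Report-noisy-max with Laplace(2/ε) noise on m counting queries of sensitivity 1
satisfies ε-differential privacy. -/
theorem report_noisy_max_dp {D : Type*} (Neighbor : D → D → Prop) (m : ℕ)
    (f : Fin m → D → ℤ) (ε : ℝ) (hε : 0 < ε)
    (hsens : ∀ i d d', Neighbor d d' → |f i d - f i d'| ≤ 1) :
    ∀ d d', Neighbor d d' → ∀ j : Fin m,
      (volume.withDensity fun η : Fin m → ℝ =>
          ENNReal.ofReal (∏ i, (ε / 4) * Real.exp (-(ε * |η i|) / 2)))
        {η | ∀ i, i ≠ j → (f i d : ℝ) + η i < (f j d : ℝ) + η j} ≤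
      ENNReal.ofReal (Real.exp ε) *
        (volume.withDensity fun η : Fin m → ℝ =>
            ENNReal.ofReal (∏ i, (ε / 4) * Real.exp (-(ε * |η i|) / 2)))
          {η | ∀ i, i ≠ j → (f i d' : ℝ) + η i < (f j d' : ℝ) + η j} := by
  intro d d' hN j
  set g : (Fin m → ℝ) → ENNReal :=
    fun η => ENNReal.ofReal (∏ i, (ε / 4) * Real.exp (-(ε * |η i|) / 2)) with hgdef
  -- measurability of the winning sets
  have measSet : ∀ e : D, MeasurableSet
      {η : Fin m → ℝ | ∀ i, i ≠ j → (f i e : ℝ) + η i < (f j e : ℝ) + η j} := by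
    intro e
    have heq : {η : Fin m → ℝ | ∀ i, i ≠ j → (f i e : ℝ) + η i < (f j e : ℝ) + η j}
        = ⋂ i, {η : Fin m → ℝ | i ≠ j → (f i e : ℝ) + η i < (f j e : ℝ) + η j} := by
      ext η; simp [Set.mem_iInter]
    rw [heq]
    refine MeasurableSet.iInter fun i => ?_
    by_cases hij : i = j
    · simp [hij]
    · have : {η : Fin m → ℝ | i ≠ j → (f i e : ℝ) + η i < (f j e : ℝ) + η j}
          = {η : Fin m → ℝ | (f i e : ℝ) + η i < (f j e : ℝ) + η j} := by
        ext η; simp [hij]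
      rw [this]
      exact measurableSet_lt
        ((measurable_const.add (measurable_pi_apply i)))
        ((measurable_const.add (measurable_pi_apply j)))
  -- measurability of the density
  have hgmeas : Measurable g := by
    apply Measurable.ennreal_ofReal
    apply Finset.measurable_prod
    intro i _
    exact measurable_const.mul (by fun_prop : Measurable fun a : Fin m → ℝ => -(ε * |a i|) / 2).exp
  set c : Fin m → ℝ := Pi.single j 2 with hcdef
  have hci : ∀ i : Fin m, i ≠ j → c i = 0 := fun i hij => Pi.single_eq_of_ne hij 2
  have hcj : c j = 2 := Pi.single_eq_same j 2
  -- pointwise density bound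
  have hpt : ∀ η : Fin m → ℝ, g η ≤ ENNReal.ofReal (Real.exp ε) * g (η + c) := by
    intro η
    rw [hgdef]
    simp only
    rw [← ENNReal.ofReal_mul (Real.exp_nonneg ε)]
    apply ENNReal.ofReal_le_ofReal
    have hpos : ∀ x : ℝ, 0 ≤ (ε / 4) * Real.exp (-(ε * |x|) / 2) :=
      fun x => mul_nonneg (by positivity) (Real.exp_nonneg _)
    rw [← Finset.mul_prod_erase Finset.univ _ (Finset.mem_univ j),
      ← Finset.mul_prod_erase Finset.univ
        (fun i => (ε / 4) * Real.exp (-(ε * |(η + c) i|) / 2)) (Finset.mem_univ j),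
      ← mul_assoc]
    have hrest : (∏ i ∈ Finset.univ.erase j, (ε / 4) * Real.exp (-(ε * |η i|) / 2))
        = ∏ i ∈ Finset.univ.erase j, (ε / 4) * Real.exp (-(ε * |(η + c) i|) / 2) := by
      refine Finset.prod_congr rfl fun i hi => ?_
      have hij : i ≠ j := Finset.ne_of_mem_erase hi
      simp [Pi.add_apply, hci i hij]
    rw [hrest]
    refine mul_le_mul_of_nonneg_right ?_ (Finset.prod_nonneg fun i _ => hpos _)
    -- the j factor
    have hη : (η + c) j = η j + 2 := by simp [Pi.add_apply, hcj]
    rw [hη]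
    have habs : |η j + 2| ≤ |η j| + 2 := by
      calc |η j + 2| ≤ |η j| + |(2 : ℝ)| := abs_add_le _ _
        _ = |η j| + 2 := by norm_num
    have hexp : Real.exp (-(ε * |η j|) / 2) ≤ Real.exp (ε + -(ε * |η j + 2|) / 2) := by
      apply Real.exp_le_exp.mpr
      nlinarith [abs_nonneg (η j)]
    calc (ε / 4) * Real.exp (-(ε * |η j|) / 2)
        ≤ (ε / 4) * Real.exp (ε + -(ε * |η j + 2|) / 2) :=
          mul_le_mul_of_nonneg_left hexp (by positivity)
      _ = Real.exp ε * ((ε / 4) * Real.exp (-(ε * |η j + 2|) / 2)) := by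
          rw [Real.exp_add]; ring
  -- set inclusion under translation
  have hsub : {η : Fin m → ℝ | ∀ i, i ≠ j → (f i d : ℝ) + η i < (f j d : ℝ) + η j}
      ⊆ (· + c) ⁻¹' {η : Fin m → ℝ | ∀ i, i ≠ j → (f i d' : ℝ) + η i < (f j d' : ℝ) + η j} := by
    intro η hη
    intro i hij
    have h1 : ((f i d' : ℝ)) ≤ (f i d : ℝ) + 1 := by
      have := hsens i d d' hN
      have h := (abs_le.mp this).1
      exact_mod_cast by linarith [show (f i d : ℝ) - f i d' ≥ -1 from by exact_mod_cast h]
    have h2 : ((f j d : ℝ)) ≤ (f j d' : ℝ) + 1 := by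
      have := hsens j d d' hN
      have h := (abs_le.mp this).2
      exact_mod_cast by linarith [show (f j d : ℝ) - f j d' ≤ 1 from by exact_mod_cast h]
    have hlt := hη i hij
    have hi0 : (η + c) i = η i := by simp [Pi.add_apply, hci i hij]
    have hj2 : (η + c) j = η j + 2 := by simp [Pi.add_apply, hcj]
    show (f i d' : ℝ) + (η + c) i < (f j d' : ℝ) + (η + c) j
    rw [hi0, hj2]
    linarith
  have hmp : MeasurePreserving (· + c) (volume : Measure (Fin m → ℝ)) volume :=
    measurePreserving_add_right volume c
  calc (volume.withDensity g)
        {η : Fin m → ℝ | ∀ i, i ≠ j → (f i d : ℝ) + η i < (f j d : ℝ) + η j}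
      = ∫⁻ η in {η : Fin m → ℝ | ∀ i, i ≠ j → (f i d : ℝ) + η i < (f j d : ℝ) + η j},
          g η := withDensity_apply g (measSet d)
    _ ≤ ∫⁻ η in {η : Fin m → ℝ | ∀ i, i ≠ j → (f i d : ℝ) + η i < (f j d : ℝ) + η j},
          ENNReal.ofReal (Real.exp ε) * g (η + c) := lintegral_mono fun η => hpt η
    _ = ENNReal.ofReal (Real.exp ε) *
        ∫⁻ η in {η : Fin m → ℝ | ∀ i, i ≠ j → (f i d : ℝ) + η i < (f j d : ℝ) + η j},
          g (η + c) := lintegral_const_mul _ (hgmeas.comp (measurable_add_const c))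
    _ ≤ ENNReal.ofReal (Real.exp ε) *
        ∫⁻ η in (· + c) ⁻¹'
          {η : Fin m → ℝ | ∀ i, i ≠ j → (f i d' : ℝ) + η i < (f j d' : ℝ) + η j},
          g (η + c) := by gcongr ?_ * ?_; exacts [le_rfl, lintegral_mono_set hsub]
    _ = ENNReal.ofReal (Real.exp ε) *
        ∫⁻ η in {η : Fin m → ℝ | ∀ i, i ≠ j → (f i d' : ℝ) + η i < (f j d' : ℝ) + η j},
          g η := by rw [hmp.setLIntegral_comp_preimage (measSet d') hgmeas]
    _ = ENNReal.ofReal (Real.exp ε) * (volume.withDensity g)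
        {η : Fin m → ℝ | ∀ i, i ≠ j → (f i d' : ℝ) + η i < (f j d' : ℝ) + η j} := by
          rw [withDensity_apply g (measSet d')]
end

section
/- The exponential mechanism's utility guarantee: with probability at least 1 − |R|·exp(−ε·t/(2S(q))), the exponential mechanism outputs an r with q(D, r) ≥ OPT − t, where OPT = max_{r∈R} q(D, r). -/
open Finset

/-- Utility of the exponential mechanism: with probability at least
1 − |R|·exp(−εt/(2S(q))), the output r has quality at least OPT − t. -/
theorem exponential_mechanism_utility {D R : Type*} [Fintype R] [Nonempty R]
    (q : D → R → ℝ) (ε Sq t : ℝ) (hε : 0 < ε) (hS : 0 < Sq) (ht : 0 ≤ t) (d : D) :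
    1 - (Fintype.card R : ℝ) * Real.exp (-(ε * t) / (2 * Sq)) ≤
      ∑ r ∈ univ.filter
          (fun r : R => (univ.sup' univ_nonempty (q d)) - t ≤ q d r),
        Real.exp (ε * q d r / (2 * Sq)) /
          (∑ r' : R, Real.exp (ε * q d r' / (2 * Sq))) := by
  set OPT : ℝ := univ.sup' univ_nonempty (q d) with hOPT
  set w : R → ℝ := fun r => Real.exp (ε * q d r / (2 * Sq)) with hw
  set Z : ℝ := ∑ r' : R, w r' with hZ
  have hZpos : 0 < Z := Finset.sum_pos (fun r _ => Real.exp_pos _) univ_nonempty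
  -- the optimum is attained
  obtain ⟨r0, _, hr0⟩ := Finset.exists_mem_eq_sup' (univ_nonempty (α := R)) (q d)
  have hZge : Real.exp (ε * OPT / (2 * Sq)) ≤ Z := by
    rw [hOPT, hr0]
    exact Finset.single_le_sum (f := w) (fun r _ => (Real.exp_pos _).le) (mem_univ r0)
  -- split the total sum
  have hsplit :
      (∑ r ∈ univ.filter (fun r : R => OPT - t ≤ q d r), w r)
      + (∑ r ∈ univ.filter (fun r : R => ¬ (OPT - t ≤ q d r)), w r) = Z := by
    rw [hZ, ← Finset.sum_filter_add_sum_filter_not univ (fun r : R => OPT - t ≤ q d r) w]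
  have hbad :
      (∑ r ∈ univ.filter (fun r : R => ¬ (OPT - t ≤ q d r)), w r)
        ≤ (Fintype.card R : ℝ) * Real.exp (ε * (OPT - t) / (2 * Sq)) := by
    calc (∑ r ∈ univ.filter (fun r : R => ¬ (OPT - t ≤ q d r)), w r)
        ≤ ∑ _r ∈ univ.filter (fun r : R => ¬ (OPT - t ≤ q d r)),
            Real.exp (ε * (OPT - t) / (2 * Sq)) := by
          apply Finset.sum_le_sum
          intro r hr
          have : q d r ≤ OPT - t := le_of_lt (lt_of_not_ge (Finset.mem_filter.mp hr).2)
          exact Real.exp_le_exp.mpr (by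
            apply div_le_div_of_nonneg_right _ (by positivity)
            exact mul_le_mul_of_nonneg_left this hε.le)
      _ = (univ.filter (fun r : R => ¬ (OPT - t ≤ q d r))).card
            * Real.exp (ε * (OPT - t) / (2 * Sq)) := by
          rw [Finset.sum_const, nsmul_eq_mul]
      _ ≤ (Fintype.card R : ℝ) * Real.exp (ε * (OPT - t) / (2 * Sq)) := by
          apply mul_le_mul_of_nonneg_right _ (Real.exp_pos _).le
          exact_mod_cast Finset.card_filter_le _ _
  -- key bound on bad mass / Z
  have hkey : (∑ r ∈ univ.filter (fun r : R => ¬ (OPT - t ≤ q d r)), w r) / Z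
      ≤ (Fintype.card R : ℝ) * Real.exp (-(ε * t) / (2 * Sq)) := by
    have h1 : (∑ r ∈ univ.filter (fun r : R => ¬ (OPT - t ≤ q d r)), w r) / Z
        ≤ ((Fintype.card R : ℝ) * Real.exp (ε * (OPT - t) / (2 * Sq)))
            / Real.exp (ε * OPT / (2 * Sq)) := by
      exact div_le_div₀ (by positivity) hbad (Real.exp_pos _) hZge
    calc (∑ r ∈ univ.filter (fun r : R => ¬ (OPT - t ≤ q d r)), w r) / Z
        ≤ ((Fintype.card R : ℝ) * Real.exp (ε * (OPT - t) / (2 * Sq)))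
            / Real.exp (ε * OPT / (2 * Sq)) := h1
      _ = (Fintype.card R : ℝ) * Real.exp (-(ε * t) / (2 * Sq)) := by
          rw [mul_div_assoc, ← Real.exp_sub]
          ring_nf
  -- finish
  have hrw : ∑ r ∈ univ.filter (fun r : R => OPT - t ≤ q d r), w r / Z
      = (∑ r ∈ univ.filter (fun r : R => OPT - t ≤ q d r), w r) / Z := by
    rw [Finset.sum_div]
  calc 1 - (Fintype.card R : ℝ) * Real.exp (-(ε * t) / (2 * Sq))
      ≤ 1 - (∑ r ∈ univ.filter (fun r : R => ¬ (OPT - t ≤ q d r)), w r) / Z := by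
        linarith
    _ = (∑ r ∈ univ.filter (fun r : R => OPT - t ≤ q d r), w r) / Z := by
        have h2 : (∑ r ∈ univ.filter (fun r : R => OPT - t ≤ q d r), w r) / Z
            + (∑ r ∈ univ.filter (fun r : R => ¬ (OPT - t ≤ q d r)), w r) / Z = 1 := by
          rw [← add_div, hsplit, div_self hZpos.ne']
        linarith
    _ = ∑ r ∈ univ.filter (fun r : R => OPT - t ≤ q d r), w r / Z := by
        rw [Finset.sum_div]
end
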